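/- Let ε₁ be a random variable on [0,∞) with continuous density δ, survival function Δ(d) = ∫_d^∞ δ, and let ε₂ have, conditionally on ε₁, density δ(ε₂)/(1-Δ(ε₁)) on [0,ε₁]. Then for any d ≥ 0 with 0 < Δ(d) < 1, P(ε₂ ≥ d) = Δ(d) + (1-Δ(d))·ln(1-Δ(d)). -/

import Mathlib

open MeasureTheory

theorem very_hedge_integral (δ Δ : ℝ → ℝ)
    (hδc : Continuous δ) (hδnn : ∀ x, 0 ≤ δ x) (hδ0 : ∀ x < 0, δ x = 0)
    (hnorm : ∫ x in Set.Ioi (0:ℝ), δ x = 1)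
    (hΔ : ∀ d, Δ d = ∫ x in Set.Ioi d, δ x)
    (d : ℝ) (hd : 0 ≤ d) (hΔd : 0 < Δ d) (hΔd1 : Δ d < 1) :
    ∫ ε₁ in Set.Ioi (0:ℝ),
        (δ ε₁ / (1 - Δ ε₁)) * ∫ ε₂ in Set.Ioc d ε₁, δ ε₂
      = Δ d + (1 - Δ d) * Real.log (1 - Δ d) := by
  -- integrability of δ on Ioi 0
  have hint0 : IntegrableOn δ (Set.Ioi (0:ℝ)) := by
    by_contra h
    rw [MeasureTheory.integral_undef h] at hnorm
    exact one_ne_zero hnorm.symm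
  -- integrability on Ioi a for every a
  have hintIoi : ∀ a : ℝ, IntegrableOn δ (Set.Ioi a) := by
    intro a
    rcases le_or_gt 0 a with ha | ha
    · exact hint0.mono_set (Set.Ioi_subset_Ioi ha)
    · have : Set.Ioc a 0 ∪ Set.Ioi (0:ℝ) = Set.Ioi a := Set.Ioc_union_Ioi_eq_Ioi ha.le
      rw [← this]
      refine MeasureTheory.IntegrableOn.union ?_ hint0
      have hz : ∀ᵐ x ∂(volume.restrict (Set.Ioc a 0)), δ x = 0 := by
        have h1 : ∀ᵐ x ∂(volume.restrict (Set.Ioc a 0)), x ∈ Set.Ioc a 0 :=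
          ae_restrict_mem measurableSet_Ioc
        have h2 : (volume.restrict (Set.Ioc a 0)) {(0:ℝ)} = 0 := by
          rw [Measure.restrict_apply (MeasurableSet.singleton 0)]
          exact measure_mono_null Set.inter_subset_left (measure_singleton 0)
        have h3 : ∀ᵐ x ∂(volume.restrict (Set.Ioc a 0)), x ≠ 0 := by
          rw [ae_iff]
          simpa using h2
        filter_upwards [h1, h3] with x hx hx0
        exact hδ0 x (lt_of_le_of_ne hx.2 hx0)
      exact (integrable_congr hz).mpr (integrable_zero _ _ _)
  have hintIoc : ∀ a b : ℝ, IntegrableOn δ (Set.Ioc a b) :=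
    fun a b => (hintIoi a).mono_set Set.Ioc_subset_Ioi_self
  -- splitting identity
  have hsplit : ∀ a b : ℝ, a ≤ b → Δ a = (∫ x in Set.Ioc a b, δ x) + Δ b := by
    intro a b hab
    rw [hΔ a, hΔ b, ← MeasureTheory.setIntegral_union
      (Set.Ioc_disjoint_Ioi le_rfl) measurableSet_Ioi (hintIoc a b) (hintIoi b),
      Set.Ioc_union_Ioi_eq_Ioi hab]
  -- Δ is antitone
  have hanti : Antitone Δ := by
    intro a b hab
    rw [hsplit a b hab]
    have : 0 ≤ ∫ x in Set.Ioc a b, δ x :=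
      setIntegral_nonneg measurableSet_Ioc fun x _ => hδnn x
    linarith
  have hΔ0 : Δ 0 = 1 := by rw [hΔ 0]; exact hnorm
  -- Δ y = 1 - ∫ 0..y for y ≥ 0
  have hΔeq : ∀ y : ℝ, 0 ≤ y → Δ y = 1 - ∫ t in (0:ℝ)..y, δ t := by
    intro y hy
    rw [intervalIntegral.integral_of_le hy]
    have := hsplit 0 y hy
    rw [hΔ0] at this
    linarith
  -- denominator positivity on [d, ∞)
  have hpos : ∀ x : ℝ, d ≤ x → 0 < 1 - Δ x := by
    intro x hx
    have := hanti hx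
    linarith
  have hΔnn : ∀ x : ℝ, 0 ≤ Δ x := by
    intro x
    rw [hΔ x]
    exact setIntegral_nonneg measurableSet_Ioi fun t _ => hδnn t
  -- Δ measurable
  have hΔm : Measurable Δ := hanti.measurable
  -- derivative of Δ at points > 0
  have hΔderiv : ∀ x : ℝ, 0 < x → HasDerivAt Δ (-δ x) x := by
    intro x hx
    have hprim : HasDerivAt (fun u => ∫ t in (0:ℝ)..u, δ t) (δ x) x :=
      intervalIntegral.integral_hasDerivAt_right (hδc.intervalIntegrable 0 x)
        (hδc.stronglyMeasurable.stronglyMeasurableAtFilter) hδc.continuousAt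
    have h1 : HasDerivAt (fun u => 1 - ∫ t in (0:ℝ)..u, δ t) (-δ x) x := by
      simpa using (hprim.const_sub 1)
    refine h1.congr_of_eventuallyEq ?_
    filter_upwards [eventually_gt_nhds hx] with y hy
    exact hΔeq y hy.le
  -- the transformed integrand and antiderivative
  set f : ℝ → ℝ := fun x => δ x / (1 - Δ x) * (Δ d - Δ x) with hf
  set H : ℝ → ℝ := fun x => -Δ x - (1 - Δ d) * Real.log (1 - Δ x) with hH
  have hHderiv : ∀ x ∈ Set.Ioi d, HasDerivAt H (f x) x := by
    intro x hx
    have hx0 : 0 < x := lt_of_le_of_lt hd hx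
    have hΔd' := hΔderiv x hx0
    have hden : 0 < 1 - Δ x := hpos x (le_of_lt hx)
    have h1 : HasDerivAt (fun y => 1 - Δ y) (δ x) x := by
      simpa using hΔd'.const_sub 1
    have hlog : HasDerivAt (fun y => Real.log (1 - Δ y)) (δ x / (1 - Δ x)) x := by
      have := (Real.hasDerivAt_log (ne_of_gt hden)).comp x h1
      simpa [div_eq_mul_inv, mul_comm, Function.comp_def] using this
    have : HasDerivAt H (-(-δ x) - (1 - Δ d) * (δ x / (1 - Δ x))) x :=
      (hΔd'.neg).sub ((hlog.const_mul (1 - Δ d)))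
    convert this using 1
    rw [hf]; field_simp [hden.ne']
    ring
  -- integrability of f on Ioi d
  have hfint : IntegrableOn f (Set.Ioi d) := by
    have hbound : Integrable (fun x => (Δ d / (1 - Δ d)) * δ x)
        (volume.restrict (Set.Ioi d)) := ((hintIoi d).const_mul _)
    refine hbound.mono ?_ ?_
    · exact ((hδc.measurable.div ((measurable_const.sub hΔm))).mul
        (measurable_const.sub hΔm)).aestronglyMeasurable
    · filter_upwards [ae_restrict_mem measurableSet_Ioi] with x hx
      have hxd : d ≤ x := le_of_lt hx
      have hden : 0 < 1 - Δ x := hpos x hxd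
      have hdend : 0 < 1 - Δ d := by linarith
      have hle : Δ x ≤ Δ d := hanti hxd
      have h1 : 0 ≤ f x := by
        apply mul_nonneg (div_nonneg (hδnn x) hden.le)
        linarith
      rw [Real.norm_of_nonneg h1, Real.norm_of_nonneg
        (mul_nonneg (div_nonneg hΔd.le hdend.le) (hδnn x))]
      rw [hf]
      have key : (Δ d - Δ x) / (1 - Δ x) ≤ Δ d / (1 - Δ d) := by
        apply div_le_div₀ (hΔd.le) (by linarith [hΔnn x]) hdend (by linarith)
      calc δ x / (1 - Δ x) * (Δ d - Δ x) = (Δ d - Δ x) / (1 - Δ x) * δ x := by ring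
        _ ≤ Δ d / (1 - Δ d) * δ x := by
            apply mul_le_mul_of_nonneg_right key (hδnn x)
  -- Δ tends to 0 at infinity
  have hΔtendsto : Filter.Tendsto Δ Filter.atTop (nhds 0) := by
    have h1 : Filter.Tendsto (fun b : ℝ => ∫ t in (0:ℝ)..b, δ t) Filter.atTop
        (nhds 1) := by
      have := MeasureTheory.intervalIntegral_tendsto_integral_Ioi 0 hint0
        (Filter.tendsto_id (α := ℝ))
      rwa [hnorm] at this
    have h2 : Filter.Tendsto (fun b : ℝ => 1 - ∫ t in (0:ℝ)..b, δ t) Filter.atTop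
        (nhds 0) := by
      have := (tendsto_const_nhds (x := (1:ℝ)) (f := Filter.atTop)).sub h1
      simpa using this
    refine h2.congr' ?_
    filter_upwards [Filter.Ici_mem_atTop (0:ℝ)] with y hy
    exact (hΔeq y hy).symm
  -- H tends to 0 at infinity
  have hHtendsto : Filter.Tendsto H Filter.atTop (nhds 0) := by
    have hlog1 : Filter.Tendsto (fun x => Real.log (1 - Δ x)) Filter.atTop
        (nhds 0) := by
      have hc : Filter.Tendsto (fun x => 1 - Δ x) Filter.atTop (nhds 1) := by
        have := (tendsto_const_nhds (x := (1:ℝ)) (f := Filter.atTop)).sub hΔtendsto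
        simpa using this
      have := (Real.continuousAt_log one_ne_zero).tendsto.comp hc
      simpa [Function.comp_def] using this
    have : Filter.Tendsto H Filter.atTop (nhds (-0 - (1 - Δ d) * 0)) :=
      (hΔtendsto.neg).sub (hlog1.const_mul _)
    simpa using this
  -- continuity of H within Ici d at d
  have hHcont : ContinuousWithinAt H (Set.Ici d) d := by
    have hprim : ContinuousAt (fun u => 1 - ∫ t in (0:ℝ)..u, δ t) d := by
      have : HasDerivAt (fun u => ∫ t in (0:ℝ)..u, δ t) (δ d) d :=
        intervalIntegral.integral_hasDerivAt_right (hδc.intervalIntegrable 0 d)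
          (hδc.stronglyMeasurable.stronglyMeasurableAtFilter) hδc.continuousAt
      exact (this.continuousAt.const_sub 1)
    have hΔcont : ContinuousWithinAt Δ (Set.Ici d) d := by
      refine (hprim.continuousWithinAt).congr ?_ ?_
      · intro y hy
        exact hΔeq y (le_trans hd hy)
      · exact hΔeq d hd
    have hden : (0:ℝ) < 1 - Δ d := by linarith
    have h1 : ContinuousWithinAt (fun y => 1 - Δ y) (Set.Ici d) d :=
      (continuousWithinAt_const).sub hΔcont
    have hlog : ContinuousWithinAt (fun y => Real.log (1 - Δ y)) (Set.Ici d) d :=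
      h1.log (ne_of_gt hden)
    exact (hΔcont.neg).sub (hlog.const_mul _)
  -- FTC on (d, ∞)
  have hmain : ∫ x in Set.Ioi d, f x = Δ d + (1 - Δ d) * Real.log (1 - Δ d) := by
    rw [MeasureTheory.integral_Ioi_of_hasDerivAt_of_tendsto hHcont hHderiv hfint hHtendsto]
    rw [hH]
    ring
  -- the original integrand equals f on Ioi d
  have hcongr : ∀ x ∈ Set.Ioi d,
      (δ x / (1 - Δ x)) * (∫ ε₂ in Set.Ioc d x, δ ε₂) = f x := by
    intro x hx
    have : ∫ ε₂ in Set.Ioc d x, δ ε₂ = Δ d - Δ x := by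
      have := hsplit d x (le_of_lt hx)
      linarith
    rw [this, hf]
  -- integrand is zero on Ioc 0 d
  have hzero : ∀ x ∈ Set.Ioc (0:ℝ) d,
      (δ x / (1 - Δ x)) * (∫ ε₂ in Set.Ioc d x, δ ε₂) = 0 := by
    intro x hx
    rw [Set.Ioc_eq_empty (by exact not_lt.mpr hx.2)]
    simp
  -- split the integral over Ioi 0
  have hsplitset : Set.Ioc (0:ℝ) d ∪ Set.Ioi d = Set.Ioi (0:ℝ) :=
    Set.Ioc_union_Ioi_eq_Ioi hd
  have hintg2 : IntegrableOn (fun x => (δ x / (1 - Δ x)) * ∫ ε₂ in Set.Ioc d x, δ ε₂)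
      (Set.Ioi d) := by
    refine hfint.congr_fun (fun x hx => (hcongr x hx).symm) measurableSet_Ioi
  have hintg1 : IntegrableOn (fun x => (δ x / (1 - Δ x)) * ∫ ε₂ in Set.Ioc d x, δ ε₂)
      (Set.Ioc 0 d) := by
    refine MeasureTheory.integrableOn_zero.congr_fun
      (fun x hx => (hzero x hx).symm) measurableSet_Ioc
  rw [← hsplitset, MeasureTheory.setIntegral_union (Set.Ioc_disjoint_Ioi le_rfl)
    measurableSet_Ioi hintg1 hintg2,
    MeasureTheory.setIntegral_congr_fun measurableSet_Ioc hzero,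
    MeasureTheory.setIntegral_congr_fun measurableSet_Ioi hcongr,
    MeasureTheory.integral_zero, hmain, zero_add]
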